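/- Let Ω be a Polish space. There exists a countable set D ⊆ C_b(Ω) with ‖g‖_∞ ≤ 1 for all g ∈ D, such that for every finite signed Borel measure μ on Ω one has |μ|(Ω) = sup_{g ∈ D} |∫ g dμ|. -/

import Mathlib

open MeasureTheory Topology Filter
open scoped NNReal ENNReal BoundedContinuousFunction

noncomputable def sInt {Ω : Type*} [MeasurableSpace Ω] (μ : SignedMeasure Ω) (f : Ω → ℝ) : ℝ :=
  (∫ x, f x ∂μ.toJordanDecomposition.posPart) - ∫ x, f x ∂μ.toJordanDecomposition.negPart

def IsTransKernel {Ω : Type*} [MeasurableSpace Ω] (k : Ω → SignedMeasure Ω) : Prop :=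
  ∀ A : Set Ω, MeasurableSet A → Measurable fun x => k x A

def IsBddKernel {Ω : Type*} [MeasurableSpace Ω] (k : Ω → SignedMeasure Ω) : Prop :=
  IsTransKernel k ∧ ∃ C : ℝ≥0, ∀ x, (k x).totalVariation Set.univ ≤ C

def GivenByKernel {Ω : Type*} [MeasurableSpace Ω]
    (T : SignedMeasure Ω →ₗ[ℝ] SignedMeasure Ω) (k : Ω → SignedMeasure Ω) : Prop :=
  ∀ (μ : SignedMeasure Ω) (A : Set Ω), MeasurableSet A → T μ A = sInt μ (fun x => k x A)

def IsBdMeasurable {Ω : Type*} [MeasurableSpace Ω] (f : Ω → ℝ) : Prop :=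
  Measurable f ∧ ∃ C : ℝ, ∀ x, |f x| ≤ C

instance totalVariation_isFiniteMeasure {Ω : Type*} [MeasurableSpace Ω] (μ : SignedMeasure Ω) :
    IsFiniteMeasure μ.totalVariation := by
  unfold SignedMeasure.totalVariation; infer_instance

section AuxGF

variable {X : Type*} [PseudoMetricSpace X]

/-- auxiliary scalar function -/
noncomputable def hAux (c w : ℝ) : ℝ := 1 - 2 * min 1 (max 0 (c * w))

lemma hAux_cont (c : ℝ) : Continuous (hAux c) := by
  unfold hAux
  exact continuous_const.sub (continuous_const.mul ((continuous_const.min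
    (continuous_const.max (continuous_const.mul continuous_id)))))

lemma hAux_abs_le (c w : ℝ) : |hAux c w| ≤ 1 := by
  unfold hAux
  have h0 : (0:ℝ) ≤ min 1 (max 0 (c * w)) := le_min zero_le_one (le_max_left _ _)
  have h1 : min 1 (max 0 (c * w)) ≤ 1 := min_le_left _ _
  rw [abs_le]; constructor <;> linarith

/-- The bounded continuous function used in the countable family. -/
noncomputable def gF (t : Set X) (c : ℝ) : X →ᵇ ℝ :=
  BoundedContinuousFunction.ofNormedAddCommGroup
    (fun x => hAux c (Metric.infDist x t))
    ((hAux_cont c).comp (Metric.continuous_infDist_pt t)) 1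
    (fun x => by rw [Real.norm_eq_abs]; exact hAux_abs_le _ _)

lemma gF_apply (t : Set X) (c : ℝ) (x : X) :
    gF t c x = 1 - 2 * min 1 (max 0 (c * Metric.infDist x t)) := rfl

lemma gF_norm_le (t : Set X) (c : ℝ) : ‖gF t c‖ ≤ 1 :=
  BoundedContinuousFunction.norm_ofNormedAddCommGroup_le _ zero_le_one _

lemma gF_abs_le (t : Set X) (c : ℝ) (x : X) : |gF t c x| ≤ 1 := hAux_abs_le _ _

lemma gF_ge (t : Set X) {c : ℝ} (hc : 0 ≤ c) (x : X) :
    1 - 2 * (c * Metric.infDist x t) ≤ gF t c x := by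
  rw [gF_apply]
  have h2 : max 0 (c * Metric.infDist x t) = c * Metric.infDist x t :=
    max_eq_right (mul_nonneg hc Metric.infDist_nonneg)
  rw [h2]
  have := min_le_right 1 (c * Metric.infDist x t)
  linarith [min_le_right (1:ℝ) (c * Metric.infDist x t)]

lemma gF_eq_neg_one (t : Set X) {c : ℝ} (x : X) (h : 1 ≤ c * Metric.infDist x t) :
    gF t c x = -1 := by
  rw [gF_apply]
  have h2 : max 0 (c * Metric.infDist x t) = c * Metric.infDist x t :=
    max_eq_right (le_trans zero_le_one h)
  rw [h2, min_eq_left h]; ring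

lemma tendsto_infDist_image (f : ℕ → X) (x : X) :
    Tendsto (fun k => Metric.infDist x (f '' Set.Iic k)) atTop
      (𝓝 (Metric.infDist x (Set.range f))) := by
  set L := Metric.infDist x (Set.range f) with hL
  have hge : ∀ k, L ≤ Metric.infDist x (f '' Set.Iic k) := fun k =>
    Metric.infDist_le_infDist_of_subset (Set.image_subset_range _ _) ⟨f 0, ⟨0, Set.mem_Iic.2 (Nat.zero_le k), rfl⟩⟩
  rw [Metric.tendsto_atTop]
  intro ε hε
  obtain ⟨y, ⟨i, rfl⟩, hy⟩ := (Metric.infDist_lt_iff (Set.range_nonempty f)).1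
    (show L < L + ε by linarith)
  refine ⟨i, fun k hk => ?_⟩
  have hle : Metric.infDist x (f '' Set.Iic k) ≤ dist x (f i) :=
    Metric.infDist_le_dist_of_mem ⟨i, Set.mem_Iic.2 hk, rfl⟩
  rw [Real.dist_eq, abs_lt]
  constructor <;> [linarith [hge k]; linarith]

lemma tendsto_gF_image (f : ℕ → X) (c : ℝ) (x : X) :
    Tendsto (fun k => gF (f '' Set.Iic k) c x) atTop (𝓝 (gF (Set.range f) c x)) := by
  have := ((hAux_cont c).tendsto _).comp (tendsto_infDist_image f x)
  exact this

end AuxGF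

section AuxInt

variable {X : Type*} [MeasurableSpace X] [TopologicalSpace X] [OpensMeasurableSpace X]

lemma tendsto_integral_of_bcf (ν : Measure X) [IsFiniteMeasure ν]
    (g : ℕ → X →ᵇ ℝ) (glim : X → ℝ)
    (hb : ∀ n x, |g n x| ≤ 1)
    (hae : ∀ᵐ x ∂ν, Tendsto (fun n => g n x) atTop (𝓝 (glim x))) :
    Tendsto (fun n => ∫ x, g n x ∂ν) atTop (𝓝 (∫ x, glim x ∂ν)) := by
  refine MeasureTheory.tendsto_integral_of_dominated_convergence (fun _ => 1)
    (fun n => (g n).continuous.aestronglyMeasurable) (integrable_const 1) ?_ hae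
  intro n
  filter_upwards with x
  rw [Real.norm_eq_abs]; exact hb n x

end AuxInt

theorem stmt3 {Ω : Type*} [TopologicalSpace Ω] [PolishSpace Ω] [MeasurableSpace Ω] [BorelSpace Ω] :
    ∃ D : Set (Ω →ᵇ ℝ), D.Countable ∧ (∀ g ∈ D, ‖g‖ ≤ 1) ∧
      ∀ μ : SignedMeasure Ω,
        (μ.totalVariation Set.univ).toReal = sSup { r : ℝ | ∃ g ∈ D, r = |sInt μ g| } := by
  letI := TopologicalSpace.upgradeIsCompletelyMetrizable Ω
  obtain ⟨S, hSc, hSd⟩ := TopologicalSpace.exists_countable_dense Ω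
  classical
  set D : Set (Ω →ᵇ ℝ) :=
    insert 1 ((fun p : Set Ω × ℚ => gF p.1 (p.2 : ℝ)) ''
      ({t | t.Finite ∧ t ⊆ S} ×ˢ Set.univ)) with hD
  have hmemD : ∀ (t : Set Ω) (q : ℚ), t.Finite → t ⊆ S → gF t (q : ℝ) ∈ D := by
    intro t q ht hts
    exact Set.mem_insert_iff.2 (Or.inr ⟨⟨t, q⟩, ⟨⟨ht, hts⟩, Set.mem_univ _⟩, rfl⟩)
  refine ⟨D, ?_, ?_, ?_⟩
  · exact (((Set.countable_setOf_finite_subset hSc).prod Set.countable_univ).image _).insert 1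
  · rintro g hg
    rcases Set.mem_insert_iff.1 hg with rfl | ⟨⟨t, q⟩, _, rfl⟩
    · refine (BoundedContinuousFunction.norm_le zero_le_one).2 fun x => ?_
      simp
    · exact gF_norm_le _ _
  intro μ
  set P := μ.toJordanDecomposition.posPart with hP
  set N := μ.toJordanDecomposition.negPart with hN
  have hsInt : ∀ g : Ω →ᵇ ℝ, sInt μ ⇑g = (∫ x, g x ∂P) - ∫ x, g x ∂N := by
    intro g; unfold sInt; rw [← hP, ← hN]
  set Pu := (P Set.univ).toReal with hPu
  set Nu := (N Set.univ).toReal with hNu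
  have hPu0 : 0 ≤ Pu := ENNReal.toReal_nonneg
  have hNu0 : 0 ≤ Nu := ENNReal.toReal_nonneg
  have hTV : (μ.totalVariation Set.univ).toReal = Pu + Nu := by
    rw [SignedMeasure.totalVariation, Measure.add_apply,
      ENNReal.toReal_add (measure_ne_top _ _) (measure_ne_top _ _)]
  set R := { r : ℝ | ∃ g ∈ D, r = |sInt μ ⇑g| } with hR
  have hub : ∀ r ∈ R, r ≤ Pu + Nu := by
    rintro r ⟨g, hg, rfl⟩
    have h1 : ‖∫ x, g x ∂P‖ ≤ Pu * ‖g‖ := g.norm_integral_le_mul_norm P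
    have h2 : ‖∫ x, g x ∂N‖ ≤ Nu * ‖g‖ := g.norm_integral_le_mul_norm N
    have hgn : ‖g‖ ≤ 1 := by
      rcases Set.mem_insert_iff.1 hg with rfl | ⟨⟨t, q⟩, _, rfl⟩
      · exact (BoundedContinuousFunction.norm_le zero_le_one).2 fun x => by simp
      · exact gF_norm_le _ _
    have hgn0 : 0 ≤ ‖g‖ := norm_nonneg _
    rw [hsInt]
    calc |(∫ x, g x ∂P) - ∫ x, g x ∂N| ≤ ‖∫ x, g x ∂P‖ + ‖∫ x, g x ∂N‖ := by
          rw [Real.norm_eq_abs, Real.norm_eq_abs] at *; exact abs_sub _ _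
      _ ≤ Pu * ‖g‖ + Nu * ‖g‖ := add_le_add h1 h2
      _ ≤ Pu + Nu := by nlinarith
  have hne : R.Nonempty := ⟨|sInt μ ⇑(1 : Ω →ᵇ ℝ)|, 1, Set.mem_insert _ _, rfl⟩
  have hbdd : BddAbove R := ⟨Pu + Nu, hub⟩
  rw [hTV]
  have key : ∀ ε0 : ℝ, 0 < ε0 → ∃ r ∈ R, Pu + Nu - ε0 ≤ r := by
    intro ε0 hε0
    set ε := ε0 / (Pu + Nu + 5) with hεdef
    have hεpos : 0 < ε := div_pos hε0 (by linarith)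
    have hε0eq : ε * (Pu + Nu + 5) = ε0 := div_mul_cancel₀ _ (by linarith)
    clear_value ε
    obtain ⟨s, hsm, hPs, hNs⟩ := μ.toJordanDecomposition.mutuallySingular
    obtain ⟨F, hFsub, hFcl, hPdiff⟩ := (hsm.compl).exists_isClosed_diff_lt
      (measure_ne_top P _) (ε := ENNReal.ofReal ε) (by simp [hεpos])
    have hFm : MeasurableSet F := hFcl.measurableSet
    have hNF : N F = 0 := measure_mono_null hFsub hNs
    have hPFc : (P Fᶜ).toReal ≤ ε := by
      have h1 : P Fᶜ ≤ ENNReal.ofReal ε := by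
        have hsub : Fᶜ ⊆ s ∪ (sᶜ \ F) := by
          intro x hx
          by_cases hxs : x ∈ s
          · exact Or.inl hxs
          · exact Or.inr ⟨hxs, hx⟩
        calc P Fᶜ ≤ P (s ∪ (sᶜ \ F)) := measure_mono hsub
          _ ≤ P s + P (sᶜ \ F) := measure_union_le _ _
          _ ≤ ENNReal.ofReal ε := by rw [hPs, zero_add]; exact hPdiff.le
      calc (P Fᶜ).toReal ≤ (ENNReal.ofReal ε).toReal :=
            ENNReal.toReal_mono (by simp) h1
        _ = ε := ENNReal.toReal_ofReal hεpos.le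
    have hPsplit : Pu = (P F).toReal + (P Fᶜ).toReal := by
      rw [hPu, ← measure_add_measure_compl hFm,
        ENNReal.toReal_add (measure_ne_top _ _) (measure_ne_top _ _)]
    have hPF0 : 0 ≤ (P F).toReal := ENNReal.toReal_nonneg
    have hPFc0 : 0 ≤ (P Fᶜ).toReal := ENNReal.toReal_nonneg
    by_cases hcase : Pu ≤ ε
    · refine ⟨|sInt μ ⇑(1 : Ω →ᵇ ℝ)|, ⟨1, Set.mem_insert _ _, rfl⟩, ?_⟩
      have h1 : sInt μ ⇑(1 : Ω →ᵇ ℝ) = Pu - Nu := by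
        rw [hsInt]; simp [integral_const, hPu, hNu, measureReal_def]
      rw [h1]
      have h2 : Nu - Pu ≤ |Pu - Nu| := by
        rw [abs_sub_comm]; exact le_abs_self _
      nlinarith
    · push_neg at hcase
      have hPF : Pu - ε ≤ (P F).toReal := by linarith
      have hFne : F.Nonempty := by
        rw [Set.nonempty_iff_ne_empty]
        rintro rfl
        simp only [measure_empty] at hPsplit
        simp only [ENNReal.toReal_zero, zero_add] at hPsplit
        linarith
      obtain ⟨x0, hx0⟩ := hFne
      set η : ℕ → ℝ := fun m => ε / (2 * ((m : ℝ) + 1)) with hηdef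
      set c : ℕ → ℝ := fun m => (m : ℝ) + 1 with hcdef
      have hm1pos : ∀ m : ℕ, (0:ℝ) < (m : ℝ) + 1 := fun m => by positivity
      have hηpos : ∀ m, 0 < η m := fun m => by
        simp only [hηdef]; positivity
      have hcpos : ∀ m, 0 < c m := fun m => hm1pos m
      have hcη : ∀ m, c m * η m = ε / 2 := fun m => by
        simp only [hηdef, hcdef]
        field_simp
      clear_value c
      set NS : ℕ → Set Ω := fun m => {y | y ∈ S ∧ Metric.infDist y F < η m} with hNSdef
      have hNSsub : ∀ m, NS m ⊆ S := fun m y hy => hy.1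
      have hNSne : ∀ m, (NS m).Nonempty := by
        intro m
        obtain ⟨y, hyS, hy⟩ := hSd.exists_mem_open Metric.isOpen_ball
          ⟨x0, Metric.mem_ball_self (hηpos m)⟩
        exact ⟨y, hyS, lt_of_le_of_lt (Metric.infDist_le_dist_of_mem hx0) hy⟩
      have hupper : ∀ m, ∀ x ∈ F, Metric.infDist x (NS m) ≤ η m := by
        intro m x hx
        obtain ⟨y, hyS, hy⟩ := hSd.exists_mem_open Metric.isOpen_ball
          ⟨x, Metric.mem_ball_self (hηpos m)⟩
        rw [Metric.mem_ball] at hy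
        have hyN : y ∈ NS m := ⟨hyS, lt_of_le_of_lt (Metric.infDist_le_dist_of_mem hx) hy⟩
        have h2 := Metric.infDist_le_dist_of_mem (x := x) hyN
        rw [dist_comm] at hy
        linarith
      have hlow : ∀ m (x : Ω), Metric.infDist x F - η m ≤ Metric.infDist x (NS m) := by
        intro m x
        by_contra hcon
        push_neg at hcon
        obtain ⟨y, hyN, hy⟩ := (Metric.infDist_lt_iff (hNSne m)).1 hcon
        have h2 : Metric.infDist x F ≤ Metric.infDist y F + dist x y :=
          Metric.infDist_le_infDist_add_dist
        have h3 := hyN.2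
        linarith
      clear_value η NS
      have hgF1 : ∀ m, ∀ x ∈ F, 1 - ε ≤ gF (NS m) (c m) x := by
        intro m x hx
        have h1 := gF_ge (NS m) (hcpos m).le x
        have h2 : c m * Metric.infDist x (NS m) ≤ c m * η m :=
          mul_le_mul_of_nonneg_left (hupper m x hx) (hcpos m).le
        rw [hcη m] at h2
        have h3 : 1 - ε ≤ 1 - 2 * (c m * Metric.infDist x (NS m)) := by linarith
        exact h3.trans h1
      have hgtend : ∀ x, x ∉ F → Tendsto (fun m => gF (NS m) (c m) x) atTop (𝓝 (-1)) := by
        intro x hx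
        have hd0 : 0 < Metric.infDist x F := (hFcl.notMem_iff_infDist_pos ⟨x0, hx0⟩).1 hx
        have hev : ∀ᶠ m in atTop, gF (NS m) (c m) x = -1 := by
          obtain ⟨M, hM⟩ := exists_nat_ge ((1 + ε / 2) / Metric.infDist x F)
          rw [div_le_iff₀ hd0] at hM
          filter_upwards [eventually_ge_atTop M] with m hm
          apply gF_eq_neg_one
          have hmM : (M : ℝ) ≤ (m : ℝ) := Nat.cast_le.2 hm
          have h1 : 1 + ε / 2 ≤ (m : ℝ) * Metric.infDist x F := by nlinarith
          have h2 : c m * (Metric.infDist x F - η m) ≤ c m * Metric.infDist x (NS m) :=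
            mul_le_mul_of_nonneg_left (hlow m x) (hcpos m).le
          have h3 : c m * (Metric.infDist x F - η m)
              = c m * Metric.infDist x F - ε / 2 := by
            rw [mul_sub, hcη m]
          have h4 : (m : ℝ) * Metric.infDist x F ≤ c m * Metric.infDist x F := by
            have : (m:ℝ) ≤ c m := by simp only [hcdef]; linarith
            exact mul_le_mul_of_nonneg_right this hd0.le
          have h5 : (1:ℝ) ≤ c m * Metric.infDist x F - ε / 2 := by linarith
          linarith
        exact Tendsto.congr' (by filter_upwards [hev] with m hm; exact hm.symm)
          tendsto_const_nhds
      have hNae : ∀ᵐ x ∂N, x ∉ F := measure_eq_zero_iff_ae_notMem.1 hNF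
      have hNlim : Tendsto (fun m => ∫ x, gF (NS m) (c m) x ∂N) atTop (𝓝 (-Nu)) := by
        have h1 := tendsto_integral_of_bcf N (fun m => gF (NS m) (c m)) (fun _ => (-1 : ℝ))
          (fun m x => gF_abs_le _ _ _) (hNae.mono fun x hx => hgtend x hx)
        have h2 : ∫ _x, (-1 : ℝ) ∂N = -Nu := by
          simp [integral_const, hNu, measureReal_def]
        rwa [h2] at h1
      obtain ⟨m0, hm0⟩ := (hNlim.eventually_lt_const
        (show -Nu < -Nu + ε by linarith)).exists
      set g8 : Ω →ᵇ ℝ := gF (NS m0) (c m0) with hg8def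
      have hintP : (1 - ε) * (P F).toReal + (-1) * (P Fᶜ).toReal ≤ ∫ x, g8 x ∂P := by
        have hiF : (1 - ε) * (P F).toReal ≤ ∫ x in F, g8 x ∂P := by
          have := setIntegral_ge_of_const_le hFm (measure_ne_top _ _)
            (fun x hx => hgF1 m0 x hx) (g8.integrable P).integrableOn
          rw [smul_eq_mul, measureReal_def] at this; linarith
        have hiFc : (-1) * (P Fᶜ).toReal ≤ ∫ x in Fᶜ, g8 x ∂P := by
          have := setIntegral_ge_of_const_le hFm.compl (measure_ne_top _ _)
            (fun x _ => (abs_le.1 (gF_abs_le _ _ x)).1) (g8.integrable P).integrableOn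
          rw [smul_eq_mul, measureReal_def] at this; linarith
        have hadd := integral_add_compl hFm (g8.integrable P)
        linarith
      have hs8 : Pu + Nu - ε * (Pu + 4) ≤ sInt μ ⇑g8 ∨ 1 < ε := by
        by_cases hε1 : ε ≤ 1
        · left
          rw [hsInt]
          have hmul : (1 - ε) * (Pu - ε) ≤ (1 - ε) * (P F).toReal :=
            mul_le_mul_of_nonneg_left hPF (by linarith)
          nlinarith
        · right; linarith
      -- finite approximation
      obtain ⟨f, hfNS⟩ := (hSc.mono (hNSsub m0)).exists_eq_range (hNSne m0)
      have hptP : ∀ x : Ω, Tendsto (fun k => gF (f '' Set.Iic k) (c m0) x) atTop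
          (𝓝 (g8 x)) := by
        intro x
        rw [hg8def, hfNS]
        exact tendsto_gF_image f (c m0) x
      have happrox : Tendsto (fun k => sInt μ ⇑(gF (f '' Set.Iic k) (c m0))) atTop
          (𝓝 (sInt μ ⇑g8)) := by
        have h1 := tendsto_integral_of_bcf P (fun k => gF (f '' Set.Iic k) (c m0)) (⇑g8)
          (fun k x => gF_abs_le _ _ _) (Filter.Eventually.of_forall hptP)
        have h2 := tendsto_integral_of_bcf N (fun k => gF (f '' Set.Iic k) (c m0)) (⇑g8)
          (fun k x => gF_abs_le _ _ _) (Filter.Eventually.of_forall hptP)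
        simp only [hsInt]
        exact h1.sub h2
      obtain ⟨k, hk⟩ := (happrox.abs.eventually_const_lt
        (show |sInt μ ⇑g8| - ε < |sInt μ ⇑g8| by linarith)).exists
      have hcq : ((m0 + 1 : ℚ) : ℝ) = c m0 := by push_cast [hcdef]; ring
      have hmem : gF (f '' Set.Iic k) (c m0) ∈ D := by
        rw [← hcq]
        exact hmemD _ _ ((Set.finite_Iic k).image f)
          ((Set.image_subset_range f _).trans (hfNS ▸ hNSsub m0))
      refine ⟨|sInt μ ⇑(gF (f '' Set.Iic k) (c m0))|, ⟨_, hmem, rfl⟩, ?_⟩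
      have habs0 : (0:ℝ) ≤ |sInt μ ⇑(gF (f '' Set.Iic k) (c m0))| := abs_nonneg _
      rcases hs8 with hs8 | hε1
      · have h5 : sInt μ ⇑g8 ≤ |sInt μ ⇑g8| := le_abs_self _
        nlinarith
      · nlinarith
  refine le_antisymm ?_ (Real.sSup_le hub (by linarith))
  refine le_of_forall_pos_le_add fun ε0 hε0 => ?_
  obtain ⟨r, hrR, hr⟩ := key ε0 hε0
  have := le_csSup hbdd hrR
  linarith
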